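/- Let C₁ > 0 be such that 0 ≤ K(t,u) ≤ C₁ u^{1/2−H} for all 0 < u < t ≤ 1, let α > 0, and let h ∈ L²([0,1]; ℝⁿ). Then for every s ∈ (0,1], the quantity I₂(s) = (α (H−1/2) s^{H−1/2} / Γ(3/2 − H)) ∫_0^s (s^{1/2−H} − u^{1/2−H}) (s−u)^{−(1/2+H)} (Kh)_u du satisfies |I₂(s)| ≤ (α (H−1/2) C₁ C₂ s^{3/2−2H} / (Γ(3/2 − H) √(2−2H))) ‖h‖. -/

import Mathlib

open MeasureTheory Real Set
open Filter

noncomputable def betaFn (a b : ℝ) : ℝ := Real.Gamma a * Real.Gamma b / Real.Gamma (a + b)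

noncomputable def cH (H : ℝ) : ℝ := Real.sqrt (H * (2*H - 1) / betaFn (2 - 2*H) (H - 1/2))

/-- The kernel `K(t,s)` of the fractional integral operator, for Hurst parameter `H`. -/
noncomputable def Ker (H t s : ℝ) : ℝ :=
  if s < t then cH H * s ^ ((1:ℝ)/2 - H) * ∫ u in s..t, u ^ (H - 1/2) * (u - s) ^ (H - 3/2)
  else 0

/-- The operator `(Kh)_t = ∫_0^t K(t,s) h_s ds`. -/
noncomputable def Kop {n : ℕ} (H : ℝ) (h : ℝ → EuclideanSpace ℝ (Fin n)) (t : ℝ) :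
    EuclideanSpace ℝ (Fin n) :=
  ∫ s in (0:ℝ)..t, Ker H t s • h s

/-- The constant `C₂ = ∫_0^1 (v^{1/2-H} - 1)(1-v)^{-(1/2+H)} dv`. -/
noncomputable def C2 (H : ℝ) : ℝ :=
  ∫ v in (0:ℝ)..1, (v ^ ((1:ℝ)/2 - H) - 1) * (1 - v) ^ (-(1/2 + H))

section Aux

variable {H : ℝ}

/-- Pointwise bounds on the `C₂` integrand. -/
lemma phi_le (hH : H ∈ Set.Ioo (1/2 : ℝ) 1) {v : ℝ} (hv0 : 0 < v) (hv1 : v ≤ 1) :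
    0 ≤ (v ^ ((1:ℝ)/2 - H) - 1) * (1 - v) ^ (-(1/2 + H)) ∧
    (v ^ ((1:ℝ)/2 - H) - 1) * (1 - v) ^ (-(1/2 + H)) ≤
      v ^ ((1:ℝ)/2 - H) * (1 - v) ^ ((1:ℝ)/2 - H) := by
  obtain ⟨hH1, hH2⟩ := hH
  have h1v : (0:ℝ) ≤ 1 - v := by linarith
  have hva : 1 ≤ v ^ ((1:ℝ)/2 - H) := by
    have := Real.rpow_le_rpow_of_nonpos hv0 hv1 (by linarith : (1:ℝ)/2 - H ≤ 0)
    simpa using this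
  constructor
  · exact mul_nonneg (by linarith) (Real.rpow_nonneg h1v _)
  rcases eq_or_lt_of_le hv1 with rfl | hv1'
  · simp only [sub_self]
    rw [Real.one_rpow, sub_self, zero_mul]
    positivity
  · have h1v' : (0:ℝ) < 1 - v := by linarith
    have hkey : v ^ ((1:ℝ)/2 - H) - 1 ≤ v ^ ((1:ℝ)/2 - H) * (1 - v) := by
      have hprod : v ^ ((1:ℝ)/2 - H) * v ^ (H - 1/2) = 1 := by
        rw [← Real.rpow_add hv0, show (1:ℝ)/2 - H + (H - 1/2) = 0 by ring, Real.rpow_zero]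
      have hvv : v ≤ v ^ (H - 1/2) := by
        have := Real.rpow_le_rpow_of_exponent_ge hv0 hv1 (by linarith : H - 1/2 ≤ (1:ℝ))
        simpa using this
      calc v ^ ((1:ℝ)/2 - H) - 1
          = v ^ ((1:ℝ)/2 - H) * (1 - v ^ (H - 1/2)) := by rw [mul_sub, mul_one, hprod]
        _ ≤ v ^ ((1:ℝ)/2 - H) * (1 - v) :=
            mul_le_mul_of_nonneg_left (by linarith) (Real.rpow_nonneg hv0.le _)
    have hcomb : (1 - v) * (1 - v) ^ (-(1/2 + H)) = (1 - v) ^ ((1:ℝ)/2 - H) := by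
      have h := (Real.rpow_add h1v' 1 (-(1/2 + H))).symm
      rw [Real.rpow_one] at h
      rw [h, show (1:ℝ) + -(1/2 + H) = (1:ℝ)/2 - H by ring]
    calc (v ^ ((1:ℝ)/2 - H) - 1) * (1 - v) ^ (-(1/2 + H))
        ≤ (v ^ ((1:ℝ)/2 - H) * (1 - v)) * (1 - v) ^ (-(1/2 + H)) :=
          mul_le_mul_of_nonneg_right hkey (Real.rpow_nonneg h1v _)
      _ = v ^ ((1:ℝ)/2 - H) * (1 - v) ^ ((1:ℝ)/2 - H) := by rw [mul_assoc, hcomb]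

/-- Integrability of the `C₂` integrand. -/
lemma integrableOn_phi (hH : H ∈ Set.Ioo (1/2 : ℝ) 1) :
    IntegrableOn (fun v : ℝ => (v ^ ((1:ℝ)/2 - H) - 1) * (1 - v) ^ (-(1/2 + H)))
      (Set.Ioc 0 1) := by
  obtain ⟨hH1, hH2⟩ := hH
  have ha : -1 < (1:ℝ)/2 - H := by linarith
  have ha0 : (1:ℝ)/2 - H ≤ 0 := by linarith
  set c : ℝ := ((1:ℝ)/2) ^ ((1:ℝ)/2 - H) with hc
  have hc0 : 0 ≤ c := Real.rpow_nonneg (by norm_num) _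
  have hdom : IntegrableOn
      (fun v : ℝ => c * (v ^ ((1:ℝ)/2 - H) + (1 - v) ^ ((1:ℝ)/2 - H))) (Set.Ioc 0 1) := by
    apply Integrable.const_mul
    apply Integrable.add
    · exact (intervalIntegrable_iff_integrableOn_Ioc_of_le zero_le_one).1
        (intervalIntegral.intervalIntegrable_rpow' ha)
    · have h2 : IntervalIntegrable (fun x : ℝ => (1 - x) ^ ((1:ℝ)/2 - H)) volume (1-0) (1-1) :=
        (intervalIntegral.intervalIntegrable_rpow' ha).comp_sub_left 1
      have h2' : IntervalIntegrable (fun x : ℝ => (1 - x) ^ ((1:ℝ)/2 - H)) volume 0 1 := by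
        simpa using h2.symm
      exact (intervalIntegrable_iff_integrableOn_Ioc_of_le zero_le_one).1 h2'
  refine Integrable.mono hdom ?_ ?_
  · exact (by fun_prop :
      Measurable (fun v : ℝ => (v ^ ((1:ℝ)/2 - H) - 1) * (1 - v) ^ (-(1/2 + H)))).aestronglyMeasurable
  · rw [ae_restrict_iff' measurableSet_Ioc]
    refine Eventually.of_forall fun v hv => ?_
    obtain ⟨h0, h1⟩ := hv
    have h1v : (0:ℝ) ≤ 1 - v := by linarith
    obtain ⟨hnn, hle⟩ := phi_le ⟨hH1, hH2⟩ h0 h1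
    rw [Real.norm_of_nonneg hnn, Real.norm_of_nonneg (by positivity)]
    rcases le_total v (1/2 : ℝ) with hv2 | hv2
    · have hb : (1 - v) ^ ((1:ℝ)/2 - H) ≤ c :=
        Real.rpow_le_rpow_of_nonpos (by norm_num) (by linarith) ha0
      calc (v ^ ((1:ℝ)/2 - H) - 1) * (1 - v) ^ (-(1/2 + H))
          ≤ v ^ ((1:ℝ)/2 - H) * (1 - v) ^ ((1:ℝ)/2 - H) := hle
        _ ≤ v ^ ((1:ℝ)/2 - H) * c :=
            mul_le_mul_of_nonneg_left hb (Real.rpow_nonneg h0.le _)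
        _ = c * v ^ ((1:ℝ)/2 - H) := by ring
        _ ≤ c * (v ^ ((1:ℝ)/2 - H) + (1 - v) ^ ((1:ℝ)/2 - H)) :=
            mul_le_mul_of_nonneg_left (le_add_of_nonneg_right (Real.rpow_nonneg h1v _)) hc0
    · have hb : v ^ ((1:ℝ)/2 - H) ≤ c :=
        Real.rpow_le_rpow_of_nonpos (by norm_num) hv2 ha0
      calc (v ^ ((1:ℝ)/2 - H) - 1) * (1 - v) ^ (-(1/2 + H))
          ≤ v ^ ((1:ℝ)/2 - H) * (1 - v) ^ ((1:ℝ)/2 - H) := hle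
        _ ≤ c * (1 - v) ^ ((1:ℝ)/2 - H) :=
            mul_le_mul_of_nonneg_right hb (Real.rpow_nonneg h1v _)
        _ ≤ c * (v ^ ((1:ℝ)/2 - H) + (1 - v) ^ ((1:ℝ)/2 - H)) :=
            mul_le_mul_of_nonneg_left (le_add_of_nonneg_left (Real.rpow_nonneg h0.le _)) hc0

/-- The scaling identity for the substitution `u = s v`. -/
lemma scale_eq (hH : H ∈ Set.Ioo (1/2 : ℝ) 1) {s v : ℝ} (hs : 0 < s) (hv0 : 0 ≤ v)
    (hv1 : v ≤ 1) :
    ((s*v) ^ ((1:ℝ)/2 - H) - s ^ ((1:ℝ)/2 - H)) * (s - s*v) ^ (-(1/2 + H)) =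
      s ^ (-(2*H)) * ((v ^ ((1:ℝ)/2 - H) - 1) * (1 - v) ^ (-(1/2 + H))) := by
  have h1 : (s*v) ^ ((1:ℝ)/2 - H) = s ^ ((1:ℝ)/2 - H) * v ^ ((1:ℝ)/2 - H) :=
    Real.mul_rpow hs.le hv0
  have h2 : (s - s*v) ^ (-(1/2 + H)) = s ^ (-(1/2 + H)) * (1 - v) ^ (-(1/2 + H)) := by
    rw [show s - s*v = s * (1 - v) by ring, Real.mul_rpow hs.le (by linarith)]
  have h3 : s ^ ((1:ℝ)/2 - H) * s ^ (-(1/2 + H)) = s ^ (-(2*H)) := by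
    rw [← Real.rpow_add hs]; congr 1; ring
  rw [h1, h2]
  calc (s ^ ((1:ℝ)/2 - H) * v ^ ((1:ℝ)/2 - H) - s ^ ((1:ℝ)/2 - H)) *
        (s ^ (-(1/2 + H)) * (1 - v) ^ (-(1/2 + H)))
      = (s ^ ((1:ℝ)/2 - H) * s ^ (-(1/2 + H))) *
          ((v ^ ((1:ℝ)/2 - H) - 1) * (1 - v) ^ (-(1/2 + H))) := by ring
    _ = s ^ (-(2*H)) * ((v ^ ((1:ℝ)/2 - H) - 1) * (1 - v) ^ (-(1/2 + H))) := by rw [h3]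

/-- Integrability of the kernel-difference integrand on `(0, s)`. -/
lemma g_integrableOn (hH : H ∈ Set.Ioo (1/2 : ℝ) 1) {s : ℝ} (hs0 : 0 < s) :
    IntegrableOn
      (fun u : ℝ => (u ^ ((1:ℝ)/2 - H) - s ^ ((1:ℝ)/2 - H)) * (s - u) ^ (-(1/2 + H)))
      (Set.Ioc 0 s) := by
  have h1 : IntervalIntegrable
      (fun v : ℝ => (v ^ ((1:ℝ)/2 - H) - 1) * (1 - v) ^ (-(1/2 + H))) volume 0 1 :=
    (intervalIntegrable_iff_integrableOn_Ioc_of_le zero_le_one).2 (integrableOn_phi hH)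
  have h2 := h1.comp_mul_left (c := s⁻¹)
  rw [show (0:ℝ)/s⁻¹ = 0 by simp, show (1:ℝ)/s⁻¹ = s by field_simp] at h2
  have h3 : IntegrableOn
      (fun x : ℝ => ((s⁻¹*x) ^ ((1:ℝ)/2 - H) - 1) * (1 - s⁻¹*x) ^ (-(1/2 + H)))
      (Set.Ioc 0 s) :=
    (intervalIntegrable_iff_integrableOn_Ioc_of_le hs0.le).1 h2
  have h4 : IntegrableOn
      (fun x : ℝ => s ^ (-(2*H)) * (((s⁻¹*x) ^ ((1:ℝ)/2 - H) - 1) * (1 - s⁻¹*x) ^ (-(1/2 + H))))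
      (Set.Ioc 0 s) := h3.const_mul (s ^ (-(2*H)))
  refine h4.congr_fun ?_ measurableSet_Ioc
  intro u hu
  have hv0 : (0:ℝ) ≤ s⁻¹ * u := mul_nonneg (inv_nonneg.2 hs0.le) hu.1.le
  have hv1 : s⁻¹ * u ≤ 1 := by
    have := (div_le_one hs0).2 hu.2
    rwa [div_eq_inv_mul] at this
  have hkey := scale_eq hH hs0 hv0 hv1
  rw [show s * (s⁻¹ * u) = u by field_simp] at hkey
  exact hkey.symm

/-- Value of the integral of the kernel-difference integrand. -/
lemma g_integral (hH : H ∈ Set.Ioo (1/2 : ℝ) 1) {s : ℝ} (hs0 : 0 < s) :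
    ∫ u in (0:ℝ)..s, (u ^ ((1:ℝ)/2 - H) - s ^ ((1:ℝ)/2 - H)) * (s - u) ^ (-(1/2 + H)) =
      C2 H * s ^ (1 - 2*H) := by
  have hsub := intervalIntegral.smul_integral_comp_mul_left
    (fun u : ℝ => (u ^ ((1:ℝ)/2 - H) - s ^ ((1:ℝ)/2 - H)) * (s - u) ^ (-(1/2 + H)))
    s (a := 0) (b := 1)
  rw [mul_zero, mul_one] at hsub
  rw [← hsub]
  have hcongr : (∫ v in (0:ℝ)..1,
      ((s*v) ^ ((1:ℝ)/2 - H) - s ^ ((1:ℝ)/2 - H)) * (s - s*v) ^ (-(1/2 + H))) =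
      ∫ v in (0:ℝ)..1,
        s ^ (-(2*H)) * ((v ^ ((1:ℝ)/2 - H) - 1) * (1 - v) ^ (-(1/2 + H))) := by
    apply intervalIntegral.integral_congr
    intro v hv
    rw [Set.uIcc_of_le zero_le_one] at hv
    exact scale_eq hH hs0 hv.1 hv.2
  rw [hcongr, intervalIntegral.integral_const_mul, smul_eq_mul, ← C2]
  have hss : s * s ^ (-(2*H)) = s ^ (1 - 2*H) := by
    nth_rewrite 1 [← Real.rpow_one s]
    rw [← Real.rpow_add hs0, show (1:ℝ) + -(2*H) = 1 - 2*H by ring]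
  rw [show s * (s ^ (-(2*H)) * C2 H) = (s * s ^ (-(2*H))) * C2 H by ring, hss]
  ring

/-- The basic bound on `‖(Kh)_u‖`. -/
lemma Kop_le (hH : H ∈ Set.Ioo (1/2 : ℝ) 1) {n : ℕ} (C₁ : ℝ) (hC₁ : 0 < C₁)
    (hK : ∀ u t : ℝ, 0 < u → u < t → t ≤ 1 →
      0 ≤ Ker H t u ∧ Ker H t u ≤ C₁ * u ^ ((1:ℝ)/2 - H))
    (h : ℝ → EuclideanSpace ℝ (Fin n))
    (hh : MemLp h 2 (volume.restrict (Set.Ioc (0:ℝ) 1)))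
    {u : ℝ} (hu0 : 0 < u) (hu1 : u ≤ 1) :
    ‖Kop H h u‖ ≤ C₁ * u ^ (1 - H) / Real.sqrt (2 - 2*H) *
      Real.sqrt (∫ w in (0:ℝ)..1, ‖h w‖^2) := by
  obtain ⟨hH1, hH2⟩ := hH
  have hrle : volume.restrict (Set.Ioc (0:ℝ) u) ≤ volume.restrict (Set.Ioc (0:ℝ) 1) :=
    Measure.restrict_mono (Set.Ioc_subset_Ioc_right hu1) le_rfl
  have hhu : MemLp h 2 (volume.restrict (Set.Ioc (0:ℝ) u)) := hh.mono_measure hrle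
  have hfm : Measurable (fun v : ℝ => v ^ ((1:ℝ)/2 - H)) := by fun_prop
  have hsq : Integrable (fun v : ℝ => (v ^ ((1:ℝ)/2 - H))^2)
      (volume.restrict (Set.Ioc (0:ℝ) u)) := by
    have hint : IntegrableOn (fun v : ℝ => v ^ (1 - 2*H)) (Set.Ioc 0 u) :=
      (intervalIntegrable_iff_integrableOn_Ioc_of_le hu0.le).1
        (intervalIntegral.intervalIntegrable_rpow' (by linarith))
    refine hint.congr_fun ?_ measurableSet_Ioc
    intro v hv
    show v ^ (1 - 2*H) = (v ^ ((1:ℝ)/2 - H))^2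
    rw [pow_two, ← Real.rpow_add hv.1]
    congr 1
    ring
  have hf2 : MemLp (fun v : ℝ => v ^ ((1:ℝ)/2 - H)) 2 (volume.restrict (Set.Ioc (0:ℝ) u)) :=
    (memLp_two_iff_integrable_sq hfm.aestronglyMeasurable).2 hsq
  have hprod : Integrable (fun v : ℝ => v ^ ((1:ℝ)/2 - H) * ‖h v‖)
      (volume.restrict (Set.Ioc (0:ℝ) u)) := by
    have hsm := MemLp.smul (r := 1) hhu.norm hf2
      (hpqr := ENNReal.holderConjugate_iff.2 ENNReal.inv_two_add_inv_two)
    rw [memLp_one_iff_integrable] at hsm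
    simpa [Pi.smul_apply, smul_eq_mul, Pi.mul_def] using hsm
  have h2e : ENNReal.ofReal (2:ℝ) = 2 := ENNReal.ofReal_ofNat 2
  have hf2' : MemLp (fun v : ℝ => v ^ ((1:ℝ)/2 - H)) (ENNReal.ofReal (2:ℝ))
      (volume.restrict (Set.Ioc (0:ℝ) u)) := by rw [h2e]; exact hf2
  have hhu' : MemLp (fun v => ‖h v‖) (ENNReal.ofReal (2:ℝ)) (volume.restrict (Set.Ioc (0:ℝ) u)) := by
    rw [h2e]; exact hhu.norm
  have hconj : Real.HolderConjugate 2 2 := Real.HolderConjugate.two_two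
  have hhold := integral_mul_norm_le_Lp_mul_Lq (μ := volume.restrict (Set.Ioc (0:ℝ) u))
    hconj hf2' hhu'
  simp only [norm_norm] at hhold
  have hval : (∫ v in Set.Ioc (0:ℝ) u, ‖v ^ ((1:ℝ)/2 - H)‖ ^ (2:ℝ)) = u ^ (2 - 2*H) / (2 - 2*H) := by
    have heq : EqOn (fun v : ℝ => ‖v ^ ((1:ℝ)/2 - H)‖ ^ (2:ℝ)) (fun v : ℝ => v ^ (1 - 2*H))
        (Set.Ioc 0 u) := by
      intro v hv
      simp only
      rw [Real.norm_of_nonneg (Real.rpow_nonneg hv.1.le _), ← Real.rpow_mul hv.1.le]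
      congr 1
      ring
    rw [setIntegral_congr_fun measurableSet_Ioc heq, ← intervalIntegral.integral_of_le hu0.le,
      integral_rpow (Or.inl (by linarith)),
      show (1 - 2*H) + 1 = 2 - 2*H by ring, Real.zero_rpow (by linarith)]
    ring
  have hfac1 : ((∫ v in Set.Ioc (0:ℝ) u, ‖v ^ ((1:ℝ)/2 - H)‖ ^ (2:ℝ)) : ℝ) ^ ((1:ℝ)/2) =
      u ^ (1 - H) / Real.sqrt (2 - 2*H) := by
    rw [hval, ← Real.sqrt_eq_rpow, Real.sqrt_div (by positivity) _]
    congr 1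
    rw [show u ^ (2 - 2*H) = (u ^ (1 - H))^2 by
        rw [← Real.rpow_natCast (u ^ (1 - H)) 2, ← Real.rpow_mul hu0.le]; congr 1; push_cast; ring,
      Real.sqrt_sq (Real.rpow_nonneg hu0.le _)]
  have hfac2 : ((∫ v in Set.Ioc (0:ℝ) u, ‖h v‖ ^ (2:ℝ)) : ℝ) ^ ((1:ℝ)/2) ≤
      Real.sqrt (∫ w in (0:ℝ)..1, ‖h w‖^2) := by
    rw [Real.sqrt_eq_rpow]
    apply Real.rpow_le_rpow
      (integral_nonneg fun v => Real.rpow_nonneg (norm_nonneg _) _) ?_ (by norm_num)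
    have hi : IntegrableOn (fun w => ‖h w‖ ^ (2:ℝ)) (Set.Ioc (0:ℝ) 1) := by
      have := hh.integrable_norm_rpow (by norm_num) (by norm_num)
      simpa [IntegrableOn] using this
    have hmono := setIntegral_mono_set hi
      (Eventually.of_forall fun v => Real.rpow_nonneg (norm_nonneg _) _)
      ((Set.Ioc_subset_Ioc_right hu1).eventuallyLE)
    refine hmono.trans_eq ?_
    rw [intervalIntegral.integral_of_le zero_le_one]
    apply setIntegral_congr_fun measurableSet_Ioc
    intro v hv
    simp only
    rw [← Real.rpow_natCast (‖h v‖) 2]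
    norm_num
  calc ‖Kop H h u‖ = ‖∫ v in (0:ℝ)..u, Ker H u v • h v‖ := rfl
    _ ≤ ∫ v in (0:ℝ)..u, ‖Ker H u v • h v‖ :=
        intervalIntegral.norm_integral_le_integral_norm hu0.le
    _ = ∫ v in Set.Ioc (0:ℝ) u, ‖Ker H u v • h v‖ := by
        rw [intervalIntegral.integral_of_le hu0.le]
    _ ≤ ∫ v in Set.Ioc (0:ℝ) u, C₁ * (v ^ ((1:ℝ)/2 - H) * ‖h v‖) := by
        apply integral_mono_of_nonneg (Eventually.of_forall fun v => norm_nonneg _)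
          (hprod.const_mul C₁)
        filter_upwards [ae_restrict_mem measurableSet_Ioc] with v hv
        rcases eq_or_lt_of_le hv.2 with rfl | hvu
        · have hker : Ker H v v = 0 := by simp [Ker]
          rw [hker, zero_smul, norm_zero]
          positivity
        · rw [norm_smul, Real.norm_eq_abs, abs_of_nonneg (hK v u hv.1 hvu hu1).1, ← mul_assoc]
          exact mul_le_mul_of_nonneg_right (hK v u hv.1 hvu hu1).2 (norm_nonneg _)
    _ = C₁ * ∫ v in Set.Ioc (0:ℝ) u, v ^ ((1:ℝ)/2 - H) * ‖h v‖ := integral_const_mul _ _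
    _ ≤ C₁ * (u ^ (1 - H) / Real.sqrt (2 - 2*H) * Real.sqrt (∫ w in (0:ℝ)..1, ‖h w‖^2)) := by
        apply mul_le_mul_of_nonneg_left ?_ hC₁.le
        have hcong : (∫ v in Set.Ioc (0:ℝ) u, v ^ ((1:ℝ)/2 - H) * ‖h v‖) =
            ∫ v in Set.Ioc (0:ℝ) u, ‖v ^ ((1:ℝ)/2 - H)‖ * ‖h v‖ := by
          apply setIntegral_congr_fun measurableSet_Ioc
          intro v hv
          simp only
          rw [Real.norm_of_nonneg (Real.rpow_nonneg hv.1.le _)]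
        rw [hcong]
        refine hhold.trans ?_
        have h12 : (1:ℝ) / 2 = (1:ℝ)/2 := rfl
        calc (∫ v in Set.Ioc (0:ℝ) u, ‖v ^ ((1:ℝ)/2 - H)‖ ^ (2:ℝ)) ^ ((1:ℝ)/2) *
              (∫ v in Set.Ioc (0:ℝ) u, ‖h v‖ ^ (2:ℝ)) ^ ((1:ℝ)/2)
            ≤ (u ^ (1 - H) / Real.sqrt (2 - 2*H)) * Real.sqrt (∫ w in (0:ℝ)..1, ‖h w‖^2) := by
              apply mul_le_mul hfac1.le hfac2
                (Real.rpow_nonneg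
                  (integral_nonneg fun v => Real.rpow_nonneg (norm_nonneg _) _) _)
                (by positivity)
          _ = u ^ (1 - H) / Real.sqrt (2 - 2*H) * Real.sqrt (∫ w in (0:ℝ)..1, ‖h w‖^2) := rfl
    _ = C₁ * u ^ (1 - H) / Real.sqrt (2 - 2*H) * Real.sqrt (∫ w in (0:ℝ)..1, ‖h w‖^2) := by
        ring

end Aux

/-- Estimate (13): `|I₂(s)| ≤ (α(H-1/2)C₁C₂ s^{3/2-2H}/(Γ(3/2-H)√(2-2H))) ‖h‖`. -/
theorem stmt_5 (H : ℝ) (hH : H ∈ Set.Ioo (1/2 : ℝ) 1) (n : ℕ) (hn : 1 ≤ n)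
    (C₁ : ℝ) (hC₁ : 0 < C₁)
    (hK : ∀ u t : ℝ, 0 < u → u < t → t ≤ 1 →
      0 ≤ Ker H t u ∧ Ker H t u ≤ C₁ * u ^ ((1:ℝ)/2 - H))
    (α : ℝ) (hα : 0 < α)
    (h : ℝ → EuclideanSpace ℝ (Fin n))
    (hh : MemLp h 2 (volume.restrict (Set.Ioc (0:ℝ) 1))) :
    ∀ s ∈ Set.Ioc (0:ℝ) 1,
      ‖(α * (H - 1/2) * s ^ (H - 1/2) / Real.Gamma (3/2 - H)) •
          ∫ u in (0:ℝ)..s,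
            ((s ^ ((1:ℝ)/2 - H) - u ^ ((1:ℝ)/2 - H)) * (s - u) ^ (-(1/2 + H))) •
              Kop H h u‖ ≤
        α * (H - 1/2) * C₁ * C2 H * s ^ (3/2 - 2*H) /
            (Real.Gamma (3/2 - H) * Real.sqrt (2 - 2*H)) *
          Real.sqrt (∫ u in (0:ℝ)..1, ‖h u‖^2) := by
  obtain ⟨hH1, hH2⟩ := hH
  intro s hs
  obtain ⟨hs0, hs1⟩ := hs
  have hΓ : 0 < Real.Gamma (3/2 - H) := Real.Gamma_pos_of_pos (by linarith)
  have hsqrt : 0 < Real.sqrt (2 - 2*H) := Real.sqrt_pos.2 (by linarith)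
  set N := Real.sqrt (∫ w in (0:ℝ)..1, ‖h w‖^2) with hN
  have hN0 : 0 ≤ N := Real.sqrt_nonneg _
  set M := C₁ * s ^ (1 - H) / Real.sqrt (2 - 2*H) * N with hM
  have hA : 0 < α * (H - 1/2) * s ^ (H - 1/2) / Real.Gamma (3/2 - H) :=
    div_pos (mul_pos (mul_pos hα (by linarith)) (Real.rpow_pos_of_pos hs0 _)) hΓ
  rw [norm_smul, Real.norm_eq_abs, abs_of_pos hA]
  have key : ‖∫ u in (0:ℝ)..s,
      ((s ^ ((1:ℝ)/2 - H) - u ^ ((1:ℝ)/2 - H)) * (s - u) ^ (-(1/2 + H))) • Kop H h u‖ ≤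
      M * (C2 H * s ^ (1 - 2*H)) := by
    calc ‖∫ u in (0:ℝ)..s,
        ((s ^ ((1:ℝ)/2 - H) - u ^ ((1:ℝ)/2 - H)) * (s - u) ^ (-(1/2 + H))) • Kop H h u‖
        ≤ ∫ u in (0:ℝ)..s,
            ‖((s ^ ((1:ℝ)/2 - H) - u ^ ((1:ℝ)/2 - H)) * (s - u) ^ (-(1/2 + H))) • Kop H h u‖ :=
          intervalIntegral.norm_integral_le_integral_norm hs0.le
      _ = ∫ u in Set.Ioc (0:ℝ) s,
            ‖((s ^ ((1:ℝ)/2 - H) - u ^ ((1:ℝ)/2 - H)) * (s - u) ^ (-(1/2 + H))) • Kop H h u‖ := by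
          rw [intervalIntegral.integral_of_le hs0.le]
      _ ≤ ∫ u in Set.Ioc (0:ℝ) s,
            M * ((u ^ ((1:ℝ)/2 - H) - s ^ ((1:ℝ)/2 - H)) * (s - u) ^ (-(1/2 + H))) := by
          apply integral_mono_of_nonneg (Eventually.of_forall fun u => norm_nonneg _)
            ((g_integrableOn ⟨hH1, hH2⟩ hs0).const_mul M)
          filter_upwards [ae_restrict_mem measurableSet_Ioc] with u hu
          have hgu0 : 0 ≤ u ^ ((1:ℝ)/2 - H) - s ^ ((1:ℝ)/2 - H) :=
            sub_nonneg.2 (Real.rpow_le_rpow_of_nonpos hu.1 hu.2 (by linarith))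
          have hsu : 0 ≤ (s - u) ^ (-(1/2 + H)) :=
            Real.rpow_nonneg (by linarith [hu.2]) _
          rw [norm_smul, Real.norm_eq_abs, abs_mul,
            abs_of_nonpos (by linarith : s ^ ((1:ℝ)/2 - H) - u ^ ((1:ℝ)/2 - H) ≤ 0),
            abs_of_nonneg hsu, neg_sub]
          have hKb : ‖Kop H h u‖ ≤ M := by
            refine (Kop_le ⟨hH1, hH2⟩ C₁ hC₁ hK h hh hu.1 (hu.2.trans hs1)).trans ?_
            rw [hM]
            gcongr
            all_goals first | exact hu.2 | exact hu.1.le | linarith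
          calc (u ^ ((1:ℝ)/2 - H) - s ^ ((1:ℝ)/2 - H)) * (s - u) ^ (-(1/2 + H)) * ‖Kop H h u‖
              ≤ (u ^ ((1:ℝ)/2 - H) - s ^ ((1:ℝ)/2 - H)) * (s - u) ^ (-(1/2 + H)) * M :=
                mul_le_mul_of_nonneg_left hKb (mul_nonneg hgu0 hsu)
            _ = M * ((u ^ ((1:ℝ)/2 - H) - s ^ ((1:ℝ)/2 - H)) * (s - u) ^ (-(1/2 + H))) := by
                ring
      _ = M * ∫ u in Set.Ioc (0:ℝ) s,
            (u ^ ((1:ℝ)/2 - H) - s ^ ((1:ℝ)/2 - H)) * (s - u) ^ (-(1/2 + H)) :=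
          integral_const_mul _ _
      _ = M * (C2 H * s ^ (1 - 2*H)) := by
          rw [← intervalIntegral.integral_of_le hs0.le, g_integral ⟨hH1, hH2⟩ hs0]
  refine (mul_le_mul_of_nonneg_left key hA.le).trans_eq ?_
  rw [hM]
  have hs3 : s ^ (H - 1/2) * s ^ (1 - H) * s ^ (1 - 2*H) = s ^ (3/2 - 2*H) := by
    rw [← Real.rpow_add hs0, ← Real.rpow_add hs0]
    congr 1
    ring
  rw [show α * (H - 1/2) * s ^ (H - 1/2) / Real.Gamma (3/2 - H) *
      (C₁ * s ^ (1 - H) / Real.sqrt (2 - 2*H) * N * (C2 H * s ^ (1 - 2*H))) =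
      α * (H - 1/2) * C₁ * C2 H * (s ^ (H - 1/2) * s ^ (1 - H) * s ^ (1 - 2*H)) /
        (Real.Gamma (3/2 - H) * Real.sqrt (2 - 2*H)) * N by
    field_simp]
  rw [hs3]
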